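/- Let n ≥ 2, let β ∈ SB_n be a simple braid with x_{n−1} | β, and let m ≥ 1. Then for every γ ∈ C_{n+m}(β), the generator x_n does not divide γ. -/

import Mathlib

/-- The defining relations of the positive braid monoid `MB_∞` on generators
`x i`, `i : ℕ+`: the braid relations and the far-commutation relations. -/
def BraidRel : FreeMonoid ℕ+ → FreeMonoid ℕ+ → Prop := fun a b =>
  (∃ i : ℕ+, a = FreeMonoid.of (i + 1) * FreeMonoid.of i * FreeMonoid.of (i + 1) ∧
      b = FreeMonoid.of i * FreeMonoid.of (i + 1) * FreeMonoid.of i) ∨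
  (∃ i j : ℕ+, i + 2 ≤ j ∧ a = FreeMonoid.of i * FreeMonoid.of j ∧
      b = FreeMonoid.of j * FreeMonoid.of i)

/-- The congruence generated by the braid relations. -/
def braidCon : Con (FreeMonoid ℕ+) := conGen BraidRel

/-- The positive braid monoid `MB_∞`. -/
abbrev MB : Type := braidCon.Quotient

/-- The generator `x_i` of `MB_∞`, for `i : ℕ+`. -/
def braidGen (i : ℕ+) : MB := braidCon.mk' (FreeMonoid.of i)

/-- The generator `x_i` of `MB_∞`, indexed by a natural number `i ≥ 1`
(junk value `x_1` for `i = 0`). -/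
def X (i : ℕ) : MB := braidGen ⟨max i 1, lt_of_lt_of_le one_pos (le_max_right i 1)⟩

/-- `x_i` divides `β`: `β = δ * x_i * ε` for some `δ ε ∈ MB_∞`. -/
def GenDvd (i : ℕ) (β : MB) : Prop := ∃ δ ε : MB, β = δ * X i * ε

/-- `x_i` left-divides `β`: `β = x_i * ε` for some `ε ∈ MB_∞`. -/
def GenDvdL (i : ℕ) (β : MB) : Prop := ∃ ε : MB, β = X i * ε

/-- `x_i` right-divides `β`: `β = δ * x_i` for some `δ ∈ MB_∞`. -/
def GenDvdR (i : ℕ) (β : MB) : Prop := ∃ δ : MB, β = δ * X i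

/-- The set `SB_n` of simple braids in `MB_n`: products of words in the
generators `x_1, …, x_{n-1}` in which each generator appears at most once. -/
def SB (n : ℕ) : Set MB :=
  {β | ∃ w : List ℕ, w.Nodup ∧ (∀ i ∈ w, 1 ≤ i ∧ i < n) ∧ β = (w.map X).prod}

/-- The simple centralizer `C_n(β)` of `β` in `SB_n`. -/
def C (n : ℕ) (β : MB) : Set MB := {γ ∈ SB n | β * γ = γ * β}

/-- `c_n(β)`, the cardinality of the simple centralizer `C_n(β)`. -/
noncomputable def c (n : ℕ) (β : MB) : ℕ := (C n β).ncard

/-! ### Auxiliary machinery -/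

def sw (i : ℕ) : Equiv.Perm ℕ := Equiv.swap i (i+1)

lemma sw_braid (i : ℕ) : sw (i+1) * sw i * sw (i+1) = sw i * sw (i+1) * sw i := by
  ext x
  simp only [sw, Equiv.Perm.mul_apply, Equiv.swap_apply_def]
  split_ifs <;> omega

lemma sw_comm (i j : ℕ) (h : i + 2 ≤ j) : sw i * sw j = sw j * sw i := by
  ext x
  simp only [sw, Equiv.Perm.mul_apply, Equiv.swap_apply_def]
  split_ifs <;> omega

def permF : FreeMonoid ℕ+ →* Equiv.Perm ℕ := FreeMonoid.lift (fun i => sw (i : ℕ))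

lemma permF_rel (a b : FreeMonoid ℕ+) (h : BraidRel a b) : permF a = permF b := by
  rcases h with ⟨i, ha, hb⟩ | ⟨i, j, hij, ha, hb⟩
  · subst ha hb
    simp only [map_mul, permF, FreeMonoid.lift_eval_of, PNat.add_coe, PNat.one_coe]
    exact sw_braid (i : ℕ)
  · subst ha hb
    simp only [map_mul, permF, FreeMonoid.lift_eval_of]
    refine sw_comm _ _ ?_
    have : ((i + 2 : ℕ+) : ℕ) ≤ ((j : ℕ+) : ℕ) := (PNat.coe_le_coe _ _).2 hij
    simpa [PNat.add_coe] using this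

def permHom : MB →* Equiv.Perm ℕ :=
  Con.lift _ permF (Con.conGen_le.2 fun a b h => permF_rel a b h)

def detF (t : ℕ+) : FreeMonoid ℕ+ →* WithZero Unit :=
  FreeMonoid.lift (fun i => if i = t then 0 else 1)

lemma detF_rel (t : ℕ+) (a b : FreeMonoid ℕ+) (h : BraidRel a b) : detF t a = detF t b := by
  rcases h with ⟨i, ha, hb⟩ | ⟨i, j, hij, ha, hb⟩
  · subst ha hb
    simp only [map_mul, detF, FreeMonoid.lift_eval_of]
    by_cases h1 : i = t <;> by_cases h2 : i + 1 = t <;> simp [h1, h2]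
  · subst ha hb
    simp only [map_mul, detF, FreeMonoid.lift_eval_of]
    by_cases h1 : i = t <;> by_cases h2 : j = t <;> simp [h1, h2]

def detHom (t : ℕ+) : MB →* WithZero Unit :=
  Con.lift _ (detF t) (Con.conGen_le.2 fun a b h => detF_rel t a b h)

lemma permHom_gen (i : ℕ+) : permHom (braidGen i) = sw (i : ℕ) := rfl
lemma detHom_gen (t i : ℕ+) : detHom t (braidGen i) = if i = t then 0 else 1 := rfl

def phi (w : List ℕ) : Equiv.Perm ℕ := (w.map sw).prod

@[simp] lemma phi_nil : phi [] = 1 := rfl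
@[simp] lemma phi_cons (a : ℕ) (l : List ℕ) : phi (a :: l) = sw a * phi l := by simp [phi]
lemma phi_append (p q : List ℕ) : phi (p ++ q) = phi p * phi q := by simp [phi]
lemma sw_apply_lo (i x : ℕ) (h : x < i) : sw i x = x :=
  Equiv.swap_apply_of_ne_of_ne (by omega) (by omega)
lemma sw_apply_hi (i x : ℕ) (h : i + 1 < x) : sw i x = x :=
  Equiv.swap_apply_of_ne_of_ne (by omega) (by omega)
lemma sw_left (i : ℕ) : sw i i = i + 1 := Equiv.swap_apply_left _ _
lemma sw_right (i : ℕ) : sw i (i+1) = i := Equiv.swap_apply_right _ _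

lemma phi_fix_hi (v : List ℕ) (k : ℕ) (hv : ∀ i ∈ v, i ≤ k) (x : ℕ) (hx : k + 2 ≤ x) :
    phi v x = x := by
  induction v with
  | nil => rfl
  | cons a l ih =>
    have ha := hv a (by simp)
    rw [phi_cons, Equiv.Perm.mul_apply, ih (fun i hi => hv i (by simp [hi]))]
    exact sw_apply_hi a x (by omega)

lemma phi_fixpt (v : List ℕ) (x : ℕ) (hv : ∀ i ∈ v, x ≠ i ∧ x ≠ i + 1) : phi v x = x := by
  induction v with
  | nil => rfl
  | cons a l ih =>
    have ha := hv a (by simp)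
    rw [phi_cons, Equiv.Perm.mul_apply, ih (fun i hi => hv i (by simp [hi]))]
    exact Equiv.swap_apply_of_ne_of_ne ha.1 ha.2

lemma phi_preserve (v : List ℕ) (a b : ℕ)
    (hv : ∀ i ∈ v, i + 1 < a ∨ b + 1 < i ∨ (a ≤ i ∧ i ≤ b)) (x : ℕ)
    (hx1 : a ≤ x) (hx2 : x ≤ b + 1) : a ≤ phi v x ∧ phi v x ≤ b + 1 := by
  induction v with
  | nil => exact ⟨hx1, hx2⟩
  | cons c l ih =>
    have hc := hv c (by simp)
    obtain ⟨h1, h2⟩ := ih (fun i hi => hv i (by simp [hi]))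
    rw [phi_cons, Equiv.Perm.mul_apply]
    simp only [sw, Equiv.swap_apply_def]
    split_ifs <;> omega

lemma pow_apply_mem (c : Equiv.Perm ℕ) (a b : ℕ)
    (hc : ∀ x, a ≤ x → x ≤ b → a ≤ c x ∧ c x ≤ b) (x : ℕ) (hx1 : a ≤ x) (hx2 : x ≤ b) :
    ∀ j : ℕ, a ≤ (c ^ j) x ∧ (c ^ j) x ≤ b := by
  intro j
  induction j with
  | zero => simpa using ⟨hx1, hx2⟩
  | succ k ih =>
    rw [pow_succ', Equiv.Perm.mul_apply]
    exact hc _ ih.1 ih.2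

lemma exists_period (c : Equiv.Perm ℕ) (a b : ℕ)
    (hc : ∀ x, a ≤ x → x ≤ b → a ≤ c x ∧ c x ≤ b) (x : ℕ) (hx1 : a ≤ x) (hx2 : x ≤ b) :
    ∃ p : ℕ, 0 < p ∧ (c ^ p) x = x := by
  have hmem := pow_apply_mem c a b hc x hx1 hx2
  have : ∃ i j : ℕ, i ≠ j ∧ (fun j : ℕ => (⟨(c ^ j) x, (hmem j).1, (hmem j).2⟩ : Set.Icc a b)) i
      = (fun j : ℕ => (⟨(c ^ j) x, (hmem j).1, (hmem j).2⟩ : Set.Icc a b)) j :=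
    Finite.exists_ne_map_eq_of_infinite _
  obtain ⟨i, j, hne, heq⟩ := this
  have hij : (c ^ i) x = (c ^ j) x := congrArg Subtype.val heq
  rcases Nat.lt_or_ge i j with h | h
  · refine ⟨j - i, by omega, ?_⟩
    have : (c ^ i) ((c ^ (j - i)) x) = (c ^ i) x := by
      rw [← Equiv.Perm.mul_apply, ← pow_add]
      have : i + (j - i) = j := by omega
      rw [this, hij]
    exact (c ^ i).injective this
  · have h' : j < i := by omega
    refine ⟨i - j, by omega, ?_⟩
    have : (c ^ j) ((c ^ (i - j)) x) = (c ^ j) x := by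
      rw [← Equiv.Perm.mul_apply, ← pow_add]
      have : j + (i - j) = i := by omega
      rw [this, ← hij]
    exact (c ^ j).injective this

lemma reach_symm (c : Equiv.Perm ℕ) (a b : ℕ)
    (hc : ∀ x, a ≤ x → x ≤ b → a ≤ c x ∧ c x ≤ b) (x y : ℕ) (hx1 : a ≤ x) (hx2 : x ≤ b)
    (j : ℕ) (h : (c ^ j) x = y) : ∃ k : ℕ, (c ^ k) y = x := by
  obtain ⟨p, hp, hpx⟩ := exists_period c a b hc x hx1 hx2
  have hmul : ∀ t : ℕ, (c ^ (t * p)) x = x := by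
    intro t
    induction t with
    | zero => simp
    | succ s ih =>
      have : (s + 1) * p = s * p + p := by ring
      rw [this, pow_add, Equiv.Perm.mul_apply, hpx, ih]
  refine ⟨j * p - j, ?_⟩
  have hjle : j ≤ j * p := Nat.le_mul_of_pos_right j hp
  rw [← h, ← Equiv.Perm.mul_apply, ← pow_add]
  have : j * p - j + j = j * p := by omega
  rw [this, hmul j]

set_option linter.unreachableTactic false in
set_option linter.unusedTactic false in
lemma key (a : ℕ) (ha : 1 ≤ a) : ∀ t : ℕ, ∀ v : List ℕ,
    (∀ j, a ≤ j → j ≤ a - 1 + t → v.count j = 1) →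
    (∀ i ∈ v, i + 1 < a ∨ a + t < i ∨ (a ≤ i ∧ i ≤ a - 1 + t)) →
    ∀ x, a ≤ x → x ≤ a + t → ∃ j : ℕ, ((phi v) ^ j) (a + t) = x := by
  intro t
  induction t with
  | zero =>
    intro v hcount hlet x hx1 hx2
    have hxa : x = a := by omega
    exact ⟨0, by simp [hxa]⟩
  | succ s ih =>
    intro v hcount hlet x hx1 hx2
    set b := a + s with hb
    clear_value b
    have hcb : v.count b = 1 := hcount b (by omega) (by omega)
    have hbv : b ∈ v := by
      by_contra hn
      rw [List.count_eq_zero_of_not_mem hn] at hcb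
      omega
    obtain ⟨p, q, hv⟩ := List.append_of_mem hbv
    subst hv
    have hcp : p.count b = 0 ∧ q.count b = 0 := by
      rw [List.count_append, List.count_cons_self] at hcb
      constructor <;> omega
    have hbp : b ∉ p := List.count_eq_zero.mp hcp.1
    have hbq : b ∉ q := List.count_eq_zero.mp hcp.2
    have hletp : ∀ i ∈ p, i + 1 < a ∨ b - 1 + 1 < i ∨ (a ≤ i ∧ i ≤ b - 1) := by
      intro i hi
      have h1 := hlet i (by simp [hi])
      have h2 : i ≠ b := fun h => hbp (h ▸ hi)
      omega
    have hletq : ∀ i ∈ q, i + 1 < a ∨ b - 1 + 1 < i ∨ (a ≤ i ∧ i ≤ b - 1) := by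
      intro i hi
      have h1 := hlet i (by simp [hi])
      have h2 : i ≠ b := fun h => hbq (h ▸ hi)
      omega
    have hletpq : ∀ i ∈ p ++ q, i + 1 < a ∨ b < i ∨ (a ≤ i ∧ i ≤ a - 1 + s) := by
      intro i hi
      rcases List.mem_append.mp hi with h | h
      · have := hletp i h; omega
      · have := hletq i h; omega
    have hcountpq : ∀ j, a ≤ j → j ≤ a - 1 + s → (p ++ q).count j = 1 := by
      intro j hj1 hj2
      have hjb : j ≠ b := by omega
      have := hcount j hj1 (by omega)
      rw [List.count_append, List.count_cons] at this
      rw [List.count_append]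
      simp only [beq_iff_eq] at this
      first
      | (rw [if_neg hjb] at this; omega)
      | (rw [if_neg (Ne.symm hjb)] at this; omega)
    have hbm1 : b - 1 + 1 = b := by omega
    have hppres : ∀ x, a ≤ x → x ≤ b → a ≤ phi p x ∧ phi p x ≤ b := by
      intro y hy1 hy2
      have := phi_preserve p a (b-1) hletp y hy1 (by omega)
      omega
    have hqpres : ∀ x, a ≤ x → x ≤ b → a ≤ phi q x ∧ phi q x ≤ b := by
      intro y hy1 hy2
      have := phi_preserve q a (b-1) hletq y hy1 (by omega)
      omega
    set c := phi (p ++ q) with hc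
    have hcpres : ∀ x, a ≤ x → x ≤ b → a ≤ c x ∧ c x ≤ b := by
      intro y hy1 hy2
      rw [hc, phi_append, Equiv.Perm.mul_apply]
      exact hppres _ (hqpres y hy1 hy2).1 (hqpres y hy1 hy2).2
    have hcapp : ∀ y, c y = phi p (phi q y) := by
      intro y; rw [hc, phi_append, Equiv.Perm.mul_apply]
    have hpfix : phi p (b+1) = b+1 := by
      refine phi_fixpt p (b+1) (fun i hi => ?_)
      have h1 := hlet i (by simp [hi])
      have h2 : i ≠ b := fun h => hbp (h ▸ hi)
      omega
    have hqfix : phi q (b+1) = b+1 := by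
      refine phi_fixpt q (b+1) (fun i hi => ?_)
      have h1 := hlet i (by simp [hi])
      have h2 : i ≠ b := fun h => hbq (h ▸ hi)
      omega
    set τ := phi (p ++ b :: q) with hτ
    have htau : ∀ y, τ y = phi p (sw b (phi q y)) := by
      intro y
      simp only [hτ, phi_append, phi_cons, Equiv.Perm.mul_apply]
    set z := phi p b with hz
    have hzmem : a ≤ z ∧ z ≤ b := hppres b (by omega) (le_refl b)
    have htop : a + (s + 1) = b + 1 := by omega
    have htaub1 : τ (b + 1) = z := by
      rw [htau, hqfix, sw_right]
    rcases Nat.lt_or_ge x (b + 1) with hxb | hxb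
    swap
    · exact ⟨0, by simp only [pow_zero, Equiv.Perm.one_apply]; omega⟩
    have hxb' : x ≤ b := by omega
    obtain ⟨j₁, hj₁⟩ := ih (p ++ q) hcountpq hletpq x hx1 hxb'
    obtain ⟨j₂, hj₂⟩ := ih (p ++ q) hcountpq hletpq z hzmem.1 hzmem.2
    obtain ⟨k, hk⟩ := reach_symm c a b hcpres b z (by omega) (le_refl b) j₂ hj₂
    have hreach : ∃ j : ℕ, (c ^ j) z = x := by
      refine ⟨j₁ + k, ?_⟩
      rw [pow_add, Equiv.Perm.mul_apply, hk]
      exact hj₁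
    have hfind0 : (c ^ (Nat.find hreach)) z = x := Nat.find_spec hreach
    set j₀ := Nat.find hreach with hj₀
    clear_value j₀
    have hfind : (c ^ j₀) z = x := hfind0
    have hclaim : ∀ k, k ≤ j₀ → (τ ^ k) z = (c ^ k) z := by
      intro k
      induction k with
      | zero => intro _; simp
      | succ r ihr =>
        intro hr
        have hrle : r ≤ j₀ := by omega
        have hy := pow_apply_mem c a b hcpres z hzmem.1 hzmem.2 r
        set y := (c ^ r) z with hyy
        have hqy := hqpres y hy.1 hy.2
        by_cases hsp : phi q y = b
        · exfalso
          have hcy : c y = z := by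
            rw [hcapp, hsp]
            all_goals exact hz.symm
          have hcy' : (c ^ (r+1)) z = z := by
            rw [pow_succ', Equiv.Perm.mul_apply]
            all_goals exact hcy
          have hx0 : (c ^ (j₀ - (r+1))) z = x := by
            have h9 : (c ^ ((j₀ - (r+1)) + (r+1))) z = x := by
              rw [Nat.sub_add_cancel hr]; exact hfind
            rwa [pow_add, Equiv.Perm.mul_apply, hcy'] at h9
          refine Nat.find_min hreach ?_ hx0
          rw [← hj₀]; omega
        · have hτy : τ y = c y := by
            rw [htau y, sw_apply_lo b _ (by omega)]
            exact (hcapp y).symm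
          rw [pow_succ', Equiv.Perm.mul_apply, pow_succ', Equiv.Perm.mul_apply, ihr hrle]
          all_goals exact hτy
    refine ⟨j₀ + 1, ?_⟩
    rw [htop, pow_succ, Equiv.Perm.mul_apply, htaub1, hclaim j₀ (le_refl _)]
    exact hfind

lemma X_eq (i : ℕ) (hi : 1 ≤ i) : X i = braidGen ⟨i, hi⟩ := by
  unfold X
  congr 1
  exact Subtype.ext (by simp; omega)

lemma permHom_X (i : ℕ) (hi : 1 ≤ i) : permHom (X i) = sw i := by
  rw [X_eq i hi]
  rfl

lemma permHom_word (w : List ℕ) (h : ∀ i ∈ w, 1 ≤ i) :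
    permHom ((w.map X).prod) = phi w := by
  induction w with
  | nil => simp
  | cons a l ih =>
    simp only [List.map_cons, List.prod_cons, map_mul, phi_cons]
    rw [permHom_X a (h a (by simp)), ih (fun i hi => h i (by simp [hi]))]

lemma detHom_word (t : ℕ+) (w : List ℕ) (h : ∀ i ∈ w, 1 ≤ i) (hw : (t : ℕ) ∉ w) :
    detHom t ((w.map X).prod) = 1 := by
  induction w with
  | nil => simp
  | cons a l ih =>
    have hat : (⟨a, h a (by simp)⟩ : ℕ+) ≠ t := by
      intro he
      apply hw
      have hav : a = (t : ℕ) := congrArg Subtype.val he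
      rw [← hav]
      exact List.mem_cons_self
    simp only [List.map_cons, List.prod_cons, map_mul]
    rw [X_eq a (h a (by simp)), show detHom t (braidGen ⟨a, h a (by simp)⟩) = 1 from if_neg hat,
      ih (fun i hi => h i (by simp [hi])) (fun hm => hw (List.mem_cons_of_mem a hm)), one_mul]

lemma mem_of_genDvd (i : ℕ) (hi : 1 ≤ i) (γ : MB) (w : List ℕ) (h : ∀ j ∈ w, 1 ≤ j)
    (hγ : γ = (w.map X).prod) (hd : GenDvd i γ) : i ∈ w := by
  by_contra hn
  obtain ⟨δ, ε, hde⟩ := hd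
  have h1 : detHom ⟨i, hi⟩ γ = 1 := by
    rw [hγ]
    exact detHom_word ⟨i, hi⟩ w h hn
  have h0 : detHom ⟨i, hi⟩ γ = 0 := by
    rw [hde, map_mul, map_mul, X_eq i hi, show detHom ⟨i, hi⟩ (braidGen ⟨i, hi⟩) = 0 from if_pos rfl, mul_zero, zero_mul]
  rw [h0] at h1
  exact (by decide : (0 : WithZero Unit) ≠ 1) h1

lemma sigma_facts (n : ℕ) (hn : 2 ≤ n) (u : List ℕ) (hnd : u.Nodup)
    (hulet : ∀ i ∈ u, 1 ≤ i ∧ i < n) (hmem : (n-1) ∈ u) :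
    phi u n < n ∧ ∀ x, n + 1 ≤ x → phi u x = x := by
  constructor
  · obtain ⟨u₁, u₂, hu⟩ := List.append_of_mem hmem
    have hcnt : u.count (n-1) = 1 := List.count_eq_one_of_mem hnd hmem
    rw [hu, List.count_append, List.count_cons_self] at hcnt
    have hu₁ : (n-1) ∉ u₁ := List.count_eq_zero.mp (by omega)
    have hu₂ : (n-1) ∉ u₂ := List.count_eq_zero.mp (by omega)
    subst hu
    have happ : ∀ y, phi (u₁ ++ (n-1) :: u₂) y = phi u₁ (sw (n-1) (phi u₂ y)) := by
      intro y
      simp only [phi_append, phi_cons, Equiv.Perm.mul_apply]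
    rw [happ]
    have h2 : phi u₂ n = n := by
      refine phi_fix_hi u₂ (n-2) (fun i hi => ?_) n (by omega)
      have h1 := hulet i (by simp [hi])
      have h3 : i ≠ n - 1 := fun h => hu₂ (h ▸ hi)
      omega
    rw [h2]
    have h3 : sw (n-1) n = n - 1 := by
      have h5 := sw_right (n-1)
      have h6 : n - 1 + 1 = n := by omega
      rwa [h6] at h5
    rw [h3]
    have h4 := phi_preserve u₁ 1 (n-2) (fun i hi => ?_) (n-1) (by omega) (by omega)
    · omega
    · have h1 := hulet i (by simp [hi])
      have h3 : i ≠ n - 1 := fun h => hu₁ (h ▸ hi)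
      omega
  · intro x hx
    refine phi_fix_hi u (n-1) (fun i hi => ?_) x (by omega)
    have := hulet i hi
    omega

/-- Lemma 2.6: if `β ∈ SB_n` with `x_{n-1} ∣ β` and `m ≥ 1`, then `x_n` does not
divide any `γ ∈ C_{n+m}(β)`. -/
theorem not_gen_dvd_of_mem_centralizer (n m : ℕ) (hn : 2 ≤ n) (hm : 1 ≤ m) (β : MB)
    (hβ : β ∈ SB n) (hβd : GenDvd (n - 1) β) (γ : MB) (hγ : γ ∈ C (n + m) β) :
    ¬ GenDvd n γ := by
  intro hd
  obtain ⟨⟨w, hwnd, hwlet, hwprod⟩, hcomm⟩ := hγ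
  obtain ⟨u, hund, hulet, huprod⟩ := hβ
  -- letters appear in the words
  have hnw : n ∈ w :=
    mem_of_genDvd n (by omega) γ w (fun j hj => (hwlet j hj).1) hwprod hd
  have hn1u : n - 1 ∈ u :=
    mem_of_genDvd (n-1) (by omega) β u (fun j hj => (hulet j hj).1) huprod hβd
  -- permutations
  have hσ : permHom β = phi u := by
    rw [huprod]; exact permHom_word u (fun i hi => (hulet i hi).1)
  have hτ : permHom γ = phi w := by
    rw [hwprod]; exact permHom_word w (fun i hi => (hwlet i hi).1)
  have hcommp : phi u * phi w = phi w * phi u := by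
    have h := congrArg permHom hcomm
    rwa [map_mul, map_mul, hσ, hτ] at h
  obtain ⟨hσn, hσfix⟩ := sigma_facts n hn u hund (fun i hi => hulet i hi) hn1u
  -- construct the top of the run
  have hPb : ∃ k : ℕ, (n + k + 1) ∉ w := by
    refine ⟨n + m, fun hmm => ?_⟩
    have := hwlet _ hmm
    omega
  have hbspec : (n + Nat.find hPb + 1) ∉ w := Nat.find_spec hPb
  have hbmin : ∀ k, k < Nat.find hPb → (n + k + 1) ∈ w := by
    intro k hk
    have := Nat.find_min hPb hk
    exact not_not.mp this
  obtain ⟨kb, hkb⟩ : ∃ kb, kb = Nat.find hPb := ⟨_, rfl⟩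
  rw [← hkb] at hbspec hbmin
  -- construct the bottom of the run
  have hPa : ∃ k : ℕ, ((n - (k+1)) ∉ w ∨ n - (k+1) = 0) := ⟨n, Or.inr (by omega)⟩
  have haspec : (n - (Nat.find hPa + 1)) ∉ w ∨ n - (Nat.find hPa + 1) = 0 :=
    Nat.find_spec hPa
  have hamin : ∀ k, k < Nat.find hPa → ((n - (k+1)) ∈ w ∧ n - (k+1) ≠ 0) := by
    intro k hk
    have := Nat.find_min hPa hk
    constructor
    · by_contra hc; exact this (Or.inl hc)
    · intro hc; exact this (Or.inr hc)
  obtain ⟨ka, hka⟩ : ∃ ka, ka = Nat.find hPa := ⟨_, rfl⟩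
  rw [← hka] at haspec hamin
  set a := n - ka with ha
  set b := n + kb with hb
  clear_value a b
  have ha1 : 1 ≤ a := by
    rcases Nat.eq_zero_or_pos ka with h0 | h0
    · omega
    · have := hamin (ka - 1) (by omega)
      omega
  have hrun : ∀ j, a ≤ j → j ≤ b → j ∈ w := by
    intro j hj1 hj2
    rcases Nat.lt_or_ge j n with hjn | hjn
    · have hk : j = n - (n - j - 1 + 1) := by omega
      have := (hamin (n - j - 1) (by omega)).1
      rw [← hk] at this
      exact this
    · rcases Nat.eq_or_lt_of_le hjn with he | hl
      · rwa [he] at hnw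
      · have hk : j = n + (j - n - 1) + 1 := by omega
        have := hbmin (j - n - 1) (by omega)
        rwa [← hk] at this
  set t := b + 1 - a with ht
  have hat : a + t = b + 1 := by omega
  have ha1t : a - 1 + t = b := by omega
  have hcount : ∀ j, a ≤ j → j ≤ a - 1 + t → w.count j = 1 := by
    intro j hj1 hj2
    exact List.count_eq_one_of_mem hwnd (hrun j hj1 (by omega))
  have hlet : ∀ i ∈ w, i + 1 < a ∨ a + t < i ∨ (a ≤ i ∧ i ≤ a - 1 + t) := by
    intro i hi
    have h1 : 1 ≤ i := (hwlet i hi).1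
    rcases Nat.lt_or_ge i a with hia | hia
    · left
      have hne : i ≠ a - 1 := by
        intro he
        rcases haspec with hs | hs
        · apply hs
          have : a - 1 = n - (ka + 1) := by omega
          rw [he, this] at hi
          exact hi
        · omega
      omega
    · rcases Nat.lt_or_ge b i with hib | hib
      swap
      · right; right; omega
      · right; left
        have hne : i ≠ b + 1 := by
          intro he
          apply hbspec
          rw [he] at hi
          exact hi
        omega
  have hkey := key a ha1 t w hcount hlet n (by omega) (by omega)
  rw [hat] at hkey
  obtain ⟨j, hj⟩ := hkey
  have hσb1 : phi u (b + 1) = b + 1 := hσfix _ (by omega)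
  have hcu : Commute (phi u) (phi w) := hcommp
  have hcj : Commute (phi u) ((phi w) ^ j) := hcu.pow_right j
  have hfix : phi u n = n := by
    calc phi u n = phi u (((phi w) ^ j) (b+1)) := by rw [hj]
    _ = (phi u * (phi w) ^ j) (b+1) := rfl
    _ = ((phi w) ^ j * phi u) (b+1) := by rw [hcj]
    _ = ((phi w) ^ j) (b+1) := by rw [Equiv.Perm.mul_apply, hσb1]
    _ = n := hj
  omega
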